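/- Let m be a positive integer and a an integer with a > m. Then ∑_{k=1}^{m} ψ₀(a+1-k)/k² = ∑_{k=1}^{m} ( ψ₁(k+a-m)/k - ψ₁(k)/(k+a-m) + ψ₁(k+a-m)/(k+a-m) ) + (1/(a-m)²)·(-ψ₀(a-m+1) + ψ₀(a+1) - ψ₀(m+1) + ψ₀(1)) + (1/(a-m))·(ψ₁(a-m+1) - ψ₁(a+1)) + (1/2)·( 2ψ₁(a+1)·(ψ₀(a-m+1) - ψ₀(m+1) + ψ₀(1)) - 2ψ₁(m+1)·ψ₀(a-m+1) + ψ₂(a-m+1) - ψ₂(a+1) ) + ψ₀(a+1)·(ψ₁(1) - ψ₁(a+1)). -/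

import Mathlib

open Finset

/-- Digamma function at a positive integer argument: `ψ₀ l = -γ + ∑_{i=1}^{l-1} 1/i`. -/
noncomputable def ψ₀ (l : ℕ) : ℝ :=
  -Real.eulerMascheroniConstant + ∑ i ∈ Finset.range (l - 1), (1 : ℝ) / (i + 1)

/-- Trigamma function at a positive integer argument: `ψ₁ l = π²/6 - ∑_{i=1}^{l-1} 1/i²`. -/
noncomputable def ψ₁ (l : ℕ) : ℝ :=
  Real.pi ^ 2 / 6 - ∑ i ∈ Finset.range (l - 1), (1 : ℝ) / (i + 1) ^ 2

/-- Tetragamma function at a positive integer argument: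
`ψ₂ l = -2ζ(3) + 2∑_{i=1}^{l-1} 1/i³`, where `ζ(3) = ∑_{i=1}^∞ 1/i³`. -/
noncomputable def ψ₂ (l : ℕ) : ℝ :=
  -2 * (∑' i : ℕ, (1 : ℝ) / (i + 1) ^ 3) +
    2 * ∑ i ∈ Finset.range (l - 1), (1 : ℝ) / (i + 1) ^ 3

noncomputable def hh1 (n : ℕ) : ℝ := ∑ i ∈ Finset.range n, (1 : ℝ) / (i + 1)
noncomputable def hh2 (n : ℕ) : ℝ := ∑ i ∈ Finset.range n, (1 : ℝ) / (i + 1) ^ 2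
noncomputable def hh3 (n : ℕ) : ℝ := ∑ i ∈ Finset.range n, (1 : ℝ) / (i + 1) ^ 3

lemma psi0_eq (l : ℕ) : ψ₀ (l + 1) = -Real.eulerMascheroniConstant + hh1 l := rfl
lemma psi1_eq (l : ℕ) : ψ₁ (l + 1) = Real.pi ^ 2 / 6 - hh2 l := rfl
lemma psi2_eq (l : ℕ) :
    ψ₂ (l + 1) = -2 * (∑' i : ℕ, (1 : ℝ) / (i + 1) ^ 3) + 2 * hh3 l := rfl
lemma psi0_one : ψ₀ 1 = -Real.eulerMascheroniConstant := by simp [ψ₀]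
lemma psi1_one : ψ₁ 1 = Real.pi ^ 2 / 6 := by simp [ψ₁]

lemma hh1_succ (n : ℕ) : hh1 (n + 1) = hh1 n + 1 / ((n : ℝ) + 1) := by
  simp [hh1, Finset.sum_range_succ]
lemma hh2_succ (n : ℕ) : hh2 (n + 1) = hh2 n + 1 / ((n : ℝ) + 1) ^ 2 := by
  simp [hh2, Finset.sum_range_succ]
lemma hh3_succ (n : ℕ) : hh3 (n + 1) = hh3 n + 1 / ((n : ℝ) + 1) ^ 3 := by
  simp [hh3, Finset.sum_range_succ]

lemma psi0_succ (l : ℕ) : ψ₀ (l + 2) = ψ₀ (l + 1) + 1 / ((l : ℝ) + 1) := by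
  rw [show l + 2 = (l + 1) + 1 from rfl, psi0_eq, psi0_eq, hh1_succ]; ring
lemma psi1_succ (l : ℕ) : ψ₁ (l + 2) = ψ₁ (l + 1) - 1 / ((l : ℝ) + 1) ^ 2 := by
  rw [show l + 2 = (l + 1) + 1 from rfl, psi1_eq, psi1_eq, hh2_succ]; ring
lemma psi2_succ (l : ℕ) : ψ₂ (l + 2) = ψ₂ (l + 1) + 2 / ((l : ℝ) + 1) ^ 3 := by
  rw [show l + 2 = (l + 1) + 1 from rfl, psi2_eq, psi2_eq, hh3_succ]; ring

lemma hh1_eq (l : ℕ) : hh1 l = ψ₀ (l + 1) - ψ₀ 1 := by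
  rw [psi0_one, psi0_eq]; ring
lemma hh2_eq (l : ℕ) : hh2 l = ψ₁ 1 - ψ₁ (l + 1) := by
  rw [psi1_one, psi1_eq]; ring

lemma step_alg (x y iy im ic g0 P A B C Y1 Y2 Y3 Z1 Z2 S : ℝ)
    (hy : y * iy = 1) (hm : (x + 1) * im = 1) (hc : (x + y + 1) * ic = 1) :
    (S + iy^2*(-C+A-B+g0) + iy*(Y3-Y1)
      + (1/2)*(2*Y1*(C-B+g0) - 2*Y2*C + Z2 - Z1) + A*(P-Y1))
    + (ic*(P-Y2) + ic^2*((B-g0) + (A - C)))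
    + C*im^2
    = (S + (Y1*im - Y2*ic + Y1*ic))
      + iy^2*(-C + (A + ic) - (B + im) + g0)
      + iy*(Y3 - (Y1 - ic^2))
      + (1/2)*(2*(Y1 - ic^2)*(C - (B + im) + g0)
          - 2*(Y2 - im^2)*C + (Z2 - (Z1 + 2*ic^3)))
      + (A + ic)*(P - (Y1 - ic^2)) := by
  linear_combination ((iy+ic)*(im*ic))*hy + ((iy+ic)*(iy*ic))*hm - ((iy+ic)*(iy*im))*hc

lemma sum_Icc_one (m : ℕ) (f : ℕ → ℝ) :
    ∑ k ∈ Finset.Icc 1 m, f k = ∑ i ∈ Finset.range m, f (i + 1) := by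
  induction m with
  | zero => simp
  | succ m ih =>
    rw [Finset.sum_Icc_succ_top (Nat.le_add_left 1 m), Finset.sum_range_succ, ih]

lemma sum_inv_Icc (m : ℕ) : ∑ k ∈ Finset.Icc 1 m, (1 : ℝ) / (k : ℝ) = hh1 m := by
  rw [sum_Icc_one]; unfold hh1; push_cast; rfl

lemma sum_invsq_Icc (m : ℕ) : ∑ k ∈ Finset.Icc 1 m, (1 : ℝ) / (k : ℝ) ^ 2 = hh2 m := by
  rw [sum_Icc_one]; unfold hh2; push_cast; rfl

lemma lemA (m : ℕ) : ∀ n : ℕ,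
    ∑ k ∈ Finset.Icc 1 m, (1 : ℝ) / ((m + n + 1 - k : ℕ) : ℝ) = hh1 (m + n) - hh1 n := by
  induction m with
  | zero => intro n; simp
  | succ m ih =>
    intro n
    rw [Finset.sum_Icc_succ_top (Nat.le_add_left 1 m)]
    have h₁ : ∑ k ∈ Finset.Icc 1 m, (1 : ℝ) / ((m + 1 + n + 1 - k : ℕ) : ℝ)
        = ∑ k ∈ Finset.Icc 1 m, (1 : ℝ) / ((m + (n + 1) + 1 - k : ℕ) : ℝ) := by
      apply Finset.sum_congr rfl; intro k _; congr 2; omega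
    rw [h₁, ih (n + 1), show m + 1 + n + 1 - (m + 1) = n + 1 from by omega,
      show m + (n + 1) = m + n + 1 from by omega, show m + 1 + n = m + n + 1 from by omega,
      hh1_succ n]
    push_cast; ring

lemma lemB (m n : ℕ) :
    ∑ k ∈ Finset.Icc 1 m, (1 : ℝ) / (((m + n + 1 - k : ℕ) : ℝ) * (k : ℝ) ^ 2)
      = (1 / ((m : ℝ) + n + 1)) * hh2 m
        + (1 / ((m : ℝ) + n + 1) ^ 2) * (hh1 m + hh1 (m + n) - hh1 n) := by
  have key : ∀ k ∈ Finset.Icc 1 m,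
      (1 : ℝ) / (((m + n + 1 - k : ℕ) : ℝ) * (k : ℝ) ^ 2)
        = (1 / ((m : ℝ) + n + 1)) * (1 / (k : ℝ) ^ 2)
          + (1 / ((m : ℝ) + n + 1) ^ 2) * (1 / (k : ℝ))
          + (1 / ((m : ℝ) + n + 1) ^ 2) * (1 / ((m + n + 1 - k : ℕ) : ℝ)) := by
    intro k hk
    simp only [Finset.mem_Icc] at hk
    have hkm : k ≤ m + n + 1 := by omega
    have hcast : ((m + n + 1 - k : ℕ) : ℝ) = (m : ℝ) + n + 1 - k := by
      rw [Nat.cast_sub hkm]; push_cast; ring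
    have hk1 : (1 : ℝ) ≤ (k : ℝ) := by exact_mod_cast hk.1
    have hkm' : (k : ℝ) ≤ (m : ℝ) := by exact_mod_cast hk.2
    have hn0 : (0 : ℝ) ≤ (n : ℝ) := Nat.cast_nonneg n
    have hck : (0 : ℝ) < (m : ℝ) + n + 1 - k := by linarith
    have hk0 : (0 : ℝ) < (k : ℝ) := by linarith
    have hc0 : (0 : ℝ) < (m : ℝ) + n + 1 := by linarith
    rw [hcast]
    field_simp
    ring
  rw [Finset.sum_congr rfl key, Finset.sum_add_distrib, Finset.sum_add_distrib,
    ← Finset.mul_sum, ← Finset.mul_sum, ← Finset.mul_sum, sum_invsq_Icc, sum_inv_Icc, lemA]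
  ring

set_option maxHeartbeats 2000000 in
lemma key (n : ℕ) (hn : 0 < n) : ∀ m : ℕ,
    ∑ k ∈ Finset.Icc 1 m, ψ₀ (m + n + 1 - k) / (k : ℝ) ^ 2 =
      ∑ k ∈ Finset.Icc 1 m, (ψ₁ (k + n) / (k : ℝ) -
          ψ₁ k / ((k + n : ℕ) : ℝ) + ψ₁ (k + n) / ((k + n : ℕ) : ℝ)) +
        (1 / (n : ℝ) ^ 2) *
          (-ψ₀ (n + 1) + ψ₀ (m + n + 1) - ψ₀ (m + 1) + ψ₀ 1) +
        (1 / (n : ℝ)) * (ψ₁ (n + 1) - ψ₁ (m + n + 1)) +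
        (1 / 2) * (2 * ψ₁ (m + n + 1) * (ψ₀ (n + 1) - ψ₀ (m + 1) + ψ₀ 1) -
          2 * ψ₁ (m + 1) * ψ₀ (n + 1) + ψ₂ (n + 1) - ψ₂ (m + n + 1)) +
        ψ₀ (m + n + 1) * (ψ₁ 1 - ψ₁ (m + n + 1)) := by
  intro m
  induction m with
  | zero =>
    rw [show (Finset.Icc 1 0 : Finset ℕ) = ∅ from rfl]
    simp only [Finset.sum_empty, show 0 + n + 1 = n + 1 from by omega,
      show 0 + 1 = 1 from rfl]
    ring
  | succ m ih =>
    simp only [show m + 1 + n + 1 = m + n + 2 from by omega,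
      show m + 1 + 1 = m + 2 from by omega]
    rw [Finset.sum_Icc_succ_top (Nat.le_add_left 1 m),
      Finset.sum_Icc_succ_top (Nat.le_add_left 1 m),
      show m + n + 2 - (m + 1) = n + 1 from by omega,
      show m + 1 + n = m + n + 1 from by omega]
    have hsplit : ∑ k ∈ Finset.Icc 1 m, ψ₀ (m + n + 2 - k) / (k : ℝ) ^ 2
        = ∑ k ∈ Finset.Icc 1 m, ψ₀ (m + n + 1 - k) / (k : ℝ) ^ 2
          + ∑ k ∈ Finset.Icc 1 m, (1 : ℝ) / (((m + n + 1 - k : ℕ) : ℝ) * (k : ℝ) ^ 2) := by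
      rw [← Finset.sum_add_distrib]
      apply Finset.sum_congr rfl
      intro k hk
      simp only [Finset.mem_Icc] at hk
      rw [show m + n + 2 - k = (m + n - k) + 2 from by omega,
        show m + n + 1 - k = (m + n - k) + 1 from by omega, psi0_succ]
      have hk0 : (0 : ℝ) < (k : ℝ) := by exact_mod_cast hk.1
      have hx : (0 : ℝ) < ((m + n - k : ℕ) : ℝ) + 1 := by positivity
      push_cast
      field_simp
    rw [hsplit, ih, lemB m n,
      psi0_succ (m + n), psi0_succ m, psi1_succ (m + n), psi1_succ m, psi2_succ (m + n),
      hh2_eq m, hh1_eq m, hh1_eq (m + n), hh1_eq n]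
    have hn0 : (n : ℝ) ≠ 0 := Nat.cast_ne_zero.mpr (by omega)
    have hm1 : (m : ℝ) + 1 ≠ 0 := by positivity
    have hc0 : (m : ℝ) + (n : ℝ) + 1 ≠ 0 := by positivity
    push_cast
    simp only [div_eq_mul_inv, ← inv_pow]
    linear_combination step_alg (m : ℝ) (n : ℝ) ((n : ℝ))⁻¹ (((m : ℝ) + 1))⁻¹
      (((m : ℝ) + (n : ℝ) + 1))⁻¹ (ψ₀ 1) (ψ₁ 1)
      (ψ₀ (m + n + 1)) (ψ₀ (m + 1)) (ψ₀ (n + 1)) (ψ₁ (m + n + 1)) (ψ₁ (m + 1))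
      (ψ₁ (n + 1)) (ψ₂ (m + n + 1)) (ψ₂ (n + 1))
      (∑ k ∈ Finset.Icc 1 m, (ψ₁ (k + n) / (k : ℝ) - ψ₁ k / ((k + n : ℕ) : ℝ)
        + ψ₁ (k + n) / ((k + n : ℕ) : ℝ)))
      (mul_inv_cancel₀ hn0) (mul_inv_cancel₀ hm1) (mul_inv_cancel₀ hc0)

theorem stmt9 (m a : ℕ) (hm : 0 < m) (ha : m < a) :
    ∑ k ∈ Finset.Icc 1 m, ψ₀ (a + 1 - k) / (k : ℝ) ^ 2 =
      ∑ k ∈ Finset.Icc 1 m, (ψ₁ (k + a - m) / (k : ℝ) -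
          ψ₁ k / ((k + a - m : ℕ) : ℝ) + ψ₁ (k + a - m) / ((k + a - m : ℕ) : ℝ)) +
        (1 / ((a : ℝ) - m) ^ 2) *
          (-ψ₀ (a - m + 1) + ψ₀ (a + 1) - ψ₀ (m + 1) + ψ₀ 1) +
        (1 / ((a : ℝ) - m)) * (ψ₁ (a - m + 1) - ψ₁ (a + 1)) +
        (1 / 2) * (2 * ψ₁ (a + 1) * (ψ₀ (a - m + 1) - ψ₀ (m + 1) + ψ₀ 1) -
          2 * ψ₁ (m + 1) * ψ₀ (a - m + 1) + ψ₂ (a - m + 1) - ψ₂ (a + 1)) +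
        ψ₀ (a + 1) * (ψ₁ 1 - ψ₁ (a + 1)) := by
  obtain ⟨n, hn, rfl⟩ : ∃ n, 0 < n ∧ a = m + n := ⟨a - m, by omega, by omega⟩
  have h := key n hn m
  simp only [show m + n - m = n from by omega,
    show ∀ k, k + (m + n) - m = k + n from fun k => by omega,
    show ((m + n : ℕ) : ℝ) - (m : ℝ) = (n : ℝ) from by push_cast; ring]
  exact h
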